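/- Let d ≥ 2, let O ⊆ ℝ^d be open and d-regular, and let D ⊆ ℝ^d be (d−1)-regular. Then the sets D × ℝ, O × {0}, and O ⊥ D := (O × {0}) ∪ (D × ℝ), viewed as subsets of ℝ^{d+1}, are all d-regular: for each such set S there are constants 0 < a ≤ b with a·r^d ≤ H^d(B(z,r) ∩ S) ≤ b·r^d for every z ∈ S and every 0 < r ≤ 1, where H^d denotes d-dimensional Hausdorff measure on ℝ^{d+1} and B(z,r) is the open Euclidean ball in ℝ^{d+1}. -/

import Mathlib

open MeasureTheory Metric

/-- The embedding `ℝ^d × ℝ → ℝ^(d+1)`, `(x,t) ↦ (x,t)`. -/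
def snocPt (d : ℕ) (x : EuclideanSpace ℝ (Fin d)) (t : ℝ) : EuclideanSpace ℝ (Fin (d + 1)) :=
  WithLp.toLp 2 (Fin.snoc (WithLp.ofLp x) t)

open Set
open scoped ENNReal NNReal Topology

noncomputable section
namespace PerpAux2


/-- Covering bound: in a proper normed space, a closed ball of radius `R` meets `X` in a set of
measure at most `N * c`, provided unit balls centered at points of `X` have measure `≤ c`. -/
lemma card_bound {V : Type*} [NormedAddCommGroup V] [ProperSpace V] [MeasurableSpace V]
    (μ : Measure V) (R : ℝ) :
    ∃ N : ℕ, ∀ (z : V) (X : Set V) (c : ℝ≥0∞),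
      (∀ w ∈ X, μ (ball w 1 ∩ X) ≤ c) → μ (closedBall z R ∩ X) ≤ N * c := by
  obtain ⟨F, hF⟩ := (isCompact_closedBall (0:V) R).elim_finite_subcover
    (fun y : V => ball y (1/2)) (fun y => isOpen_ball)
    (fun z hz => mem_iUnion.2 ⟨z, mem_ball_self (by norm_num)⟩)
  refine ⟨F.card, fun z X c hX => ?_⟩
  have hsub : closedBall z R ∩ X ⊆ ⋃ y ∈ F, ball (z + y) (1/2) ∩ X := by
    rintro u ⟨hu, huX⟩
    have : u - z ∈ closedBall (0:V) R := by
      simpa [dist_eq_norm] using hu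
    obtain ⟨y, hyF, hy⟩ := mem_iUnion₂.1 (hF this)
    refine mem_iUnion₂.2 ⟨y, hyF, ?_, huX⟩
    have : dist u (z + y) = dist (u - z) y := by
      rw [dist_eq_norm, dist_eq_norm, sub_add_eq_sub_sub]
    rw [mem_ball] at hy ⊢
    rw [this]; exact hy
  calc μ (closedBall z R ∩ X) ≤ ∑ y ∈ F, μ (ball (z + y) (1/2) ∩ X) :=
        (measure_mono hsub).trans (measure_biUnion_finset_le F _)
    _ ≤ ∑ _y ∈ F, c := by
        refine Finset.sum_le_sum fun y _ => ?_
        rcases eq_empty_or_nonempty (ball (z + y) (1/2) ∩ X) with he | ⟨w, hw, hwX⟩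
        · rw [show (1/2 : ℝ) = 2⁻¹ by norm_num] at he
          simp [he]
        · refine (measure_mono ?_).trans (hX w hwX)
          refine inter_subset_inter_left _ fun u hu => ?_
          rw [mem_ball] at hu hw ⊢
          calc dist u w ≤ dist u (z + y) + dist (z + y) w := dist_triangle _ _ _
            _ < 1/2 + 1/2 := by rw [dist_comm (z+y) w]; exact add_lt_add hu hw
            _ = 1 := by norm_num
    _ = F.card * c := by rw [Finset.sum_const, nsmul_eq_mul]

/-- Recentering: a local upper regularity bound at points of `X` extends (with a worse
constant) to arbitrary centers. -/
lemma recenter {V : Type*} [NormedAddCommGroup V] [ProperSpace V] [MeasurableSpace V]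
    (μ : Measure V) (X : Set V) (p : ℝ) (hp : 0 ≤ p) (b : ℝ) (hb : 0 < b)
    (H : ∀ w ∈ X, ∀ r : ℝ, 0 < r → r ≤ 1 → μ (ball w r ∩ X) ≤ ENNReal.ofReal (b * r ^ p)) :
    ∃ b' : ℝ, b ≤ b' ∧ 0 < b' ∧ ∀ (z : V) (r : ℝ), 0 < r → r ≤ 1 →
      μ (ball z r ∩ X) ≤ ENNReal.ofReal (b' * r ^ p) := by
  obtain ⟨N, hN⟩ := card_bound μ (1:ℝ)
  refine ⟨2 ^ p * b * (N + 1), ?_, by positivity, fun z r hr hr1 => ?_⟩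
  · have h2 : (1:ℝ) ≤ 2 ^ p := Real.one_le_rpow one_le_two hp
    have h3 : (1:ℝ) ≤ (N:ℝ) + 1 := by linarith [(Nat.cast_nonneg N : (0:ℝ) ≤ N)]
    have h4 : b * 1 ≤ b * (2 ^ p * ((N:ℝ) + 1)) :=
      mul_le_mul_of_nonneg_left (by nlinarith) hb.le
    linarith [h4]
  rcases le_or_gt r (1/2) with hhalf | hhalf
  · rcases eq_empty_or_nonempty (ball z r ∩ X) with he | ⟨w, hw, hwX⟩
    · simp [he, ENNReal.ofReal]
    · have hsub : ball z r ∩ X ⊆ ball w (2*r) ∩ X := by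
        refine inter_subset_inter_left _ fun u hu => ?_
        rw [mem_ball] at hu hw ⊢
        calc dist u w ≤ dist u z + dist z w := dist_triangle _ _ _
          _ < r + r := add_lt_add hu (by rwa [dist_comm])
          _ = 2*r := by ring
      refine (measure_mono hsub).trans ((H w hwX (2*r) (by linarith) (by linarith)).trans ?_)
      refine ENNReal.ofReal_le_ofReal ?_
      rw [Real.mul_rpow (by norm_num) hr.le]
      have key : 2 ^ p * b * (↑N + 1) * r ^ p - b * (2 ^ p * r ^ p)
          = 2 ^ p * b * (N:ℝ) * r ^ p := by ring
      have hpos : (0:ℝ) ≤ 2 ^ p * b * (N:ℝ) * r ^ p := by positivity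
      linarith [key ▸ hpos]
  · have hXball : ∀ w ∈ X, μ (ball w 1 ∩ X) ≤ ENNReal.ofReal b := by
      intro w hw
      simpa using H w hw 1 one_pos le_rfl
    have h1 : μ (ball z r ∩ X) ≤ μ (closedBall z 1 ∩ X) :=
      measure_mono (inter_subset_inter_left _ (ball_subset_closedBall.trans
        (closedBall_subset_closedBall hr1)))
    have h2 := hN z X (ENNReal.ofReal b) hXball
    refine h1.trans (h2.trans ?_)
    have : (N:ℝ≥0∞) * ENNReal.ofReal b = ENNReal.ofReal (N * b) := by
      rw [ENNReal.ofReal_mul (by positivity)]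
      simp
    rw [this]
    refine ENNReal.ofReal_le_ofReal ?_
    have hrp : (1/2:ℝ) ^ p ≤ r ^ p := Real.rpow_le_rpow (by norm_num) hhalf.le hp
    have h2p : (2:ℝ) ^ p * (1/2:ℝ) ^ p = 1 := by
      rw [← Real.mul_rpow (by norm_num) (by norm_num)]
      norm_num
    have h3 : 2 ^ p * b * (↑N + 1) * ((1/2:ℝ) ^ p) ≤ 2 ^ p * b * (↑N + 1) * r ^ p :=
      mul_le_mul_of_nonneg_left hrp (by positivity)
    have h4 : 2 ^ p * b * (↑N + 1) * ((1/2:ℝ) ^ p) = b * (↑N + 1) := by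
      calc 2 ^ p * b * (↑N + 1) * ((1/2:ℝ) ^ p)
          = (2 ^ p * (1/2:ℝ) ^ p) * (b * (↑N + 1)) := by ring
        _ = b * (↑N + 1) := by rw [h2p]; ring
    have h5 : (N:ℝ) * b ≤ b * (↑N + 1) := by nlinarith [hb.le, (Nat.cast_nonneg N : (0:ℝ) ≤ N)]
    linarith

end PerpAux2

namespace PerpAux

variable {d : ℕ}
local notation "E" => EuclideanSpace ℝ (Fin d)
local notation "E'" => EuclideanSpace ℝ (Fin (d+1))

lemma snocPt_apply_castSucc (x : E) (t : ℝ) (i : Fin d) :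
    snocPt d x t i.castSucc = x i := by
  simp [snocPt]

lemma snocPt_apply_last (x : E) (t : ℝ) : snocPt d x t (Fin.last d) = t := by
  simp [snocPt]

lemma snocPt_surj (z : E') :
    snocPt d (WithLp.toLp 2 (fun i : Fin d => z i.castSucc)) (z (Fin.last d)) = z := by
  ext i
  refine Fin.lastCases ?_ ?_ i
  · simp [snocPt]
  · intro j; simp [snocPt]

lemma dist_snocPt (x y : E) (s t : ℝ) :
    dist (snocPt d x s) (snocPt d y t) = Real.sqrt (dist x y ^ 2 + dist s t ^ 2) := by
  rw [EuclideanSpace.dist_eq, EuclideanSpace.dist_eq]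
  congr 1
  rw [Fin.sum_univ_castSucc]
  simp only [snocPt_apply_castSucc, snocPt_apply_last]
  rw [Real.sq_sqrt (by positivity)]

lemma dist_snocPt_le (x y : E) (s t : ℝ) :
    dist (snocPt d x s) (snocPt d y t) ≤ dist x y + dist s t := by
  rw [dist_snocPt]
  have h : dist x y ^ 2 + dist s t ^ 2 ≤ (dist x y + dist s t) ^ 2 := by
    have := dist_nonneg (x := x) (y := y)
    have := dist_nonneg (x := s) (y := t)
    nlinarith
  calc Real.sqrt (dist x y ^ 2 + dist s t ^ 2) ≤ Real.sqrt ((dist x y + dist s t) ^ 2) :=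
        Real.sqrt_le_sqrt h
    _ = dist x y + dist s t := Real.sqrt_sq (by positivity)

lemma dist_fst_le (x y : E) (s t : ℝ) :
    dist x y ≤ dist (snocPt d x s) (snocPt d y t) := by
  rw [dist_snocPt]
  calc dist x y = Real.sqrt (dist x y ^ 2) := (Real.sqrt_sq dist_nonneg).symm
    _ ≤ _ := Real.sqrt_le_sqrt (by nlinarith [sq_nonneg (dist s t)])

lemma dist_snd_le (x y : E) (s t : ℝ) :
    dist s t ≤ dist (snocPt d x s) (snocPt d y t) := by
  rw [dist_snocPt]
  calc dist s t = Real.sqrt (dist s t ^ 2) := (Real.sqrt_sq dist_nonneg).symm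
    _ ≤ _ := Real.sqrt_le_sqrt (by nlinarith [sq_nonneg (dist x y)])

lemma edist_snocPt_le (x y : E) (s t : ℝ) :
    edist (snocPt d x s) (snocPt d y t) ≤ edist x y + edist s t := by
  rw [edist_dist, edist_dist, edist_dist, ← ENNReal.ofReal_add dist_nonneg dist_nonneg]
  exact ENNReal.ofReal_le_ofReal (dist_snocPt_le x y s t)

lemma edist_fst_le (x y : E) (s t : ℝ) :
    edist x y ≤ edist (snocPt d x s) (snocPt d y t) := by
  rw [edist_dist, edist_dist]
  exact ENNReal.ofReal_le_ofReal (dist_fst_le x y s t)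

lemma edist_snd_le (x y : E) (s t : ℝ) :
    edist s t ≤ edist (snocPt d x s) (snocPt d y t) := by
  rw [edist_dist, edist_dist]
  exact ENNReal.ofReal_le_ofReal (dist_snd_le x y s t)

lemma isometry_snocPt_zero : Isometry (fun x : E => snocPt d x (0:ℝ)) := by
  refine Isometry.of_dist_eq fun x y => ?_
  rw [dist_snocPt]
  simp [Real.sqrt_sq dist_nonneg]

lemma lipschitz_snocPt : LipschitzWith 2 (fun p : E × ℝ => snocPt d p.1 p.2) := by
  intro p q
  calc edist (snocPt d p.1 p.2) (snocPt d q.1 q.2) ≤ edist p.1 q.1 + edist p.2 q.2 :=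
        edist_snocPt_le _ _ _ _
    _ ≤ edist p q + edist p q := by
        rw [Prod.edist_eq]
        exact add_le_add (le_max_left _ _) (le_max_right _ _)
    _ = 2 * edist p q := (two_mul _).symm

lemma continuous_snocPt : Continuous (fun p : E × ℝ => snocPt d p.1 p.2) :=
  lipschitz_snocPt.continuous

lemma measurable_snocPt : Measurable (fun p : E × ℝ => snocPt d p.1 p.2) :=
  continuous_snocPt.measurable


lemma rpow_le_self {x p : ℝ} (hx0 : 0 ≤ x) (hx1 : x ≤ 1) (hp : 1 ≤ p) : x ^ p ≤ x := by
  rcases eq_or_lt_of_le hx0 with h | h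
  · rw [← h, Real.zero_rpow (by linarith)]
  · calc x ^ p ≤ x ^ (1:ℝ) := Real.rpow_le_rpow_of_exponent_ge h hx1 hp
      _ = x := Real.rpow_one x

lemma max_rpow_le {a b p : ℝ} (ha : 0 ≤ a) (hb : 0 ≤ b) (hp : 0 ≤ p) :
    (max a b) ^ p ≤ a ^ p + b ^ p := by
  rcases max_cases a b with ⟨h, _⟩ | ⟨h, _⟩ <;> rw [h]
  · exact le_add_of_nonneg_right (Real.rpow_nonneg hb p)
  · exact le_add_of_nonneg_left (Real.rpow_nonneg ha p)

/-- Upper bound for the Hausdorff measure of a "slab" `A × [c, c+L]` in `ℝ^(d+1)`. -/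
lemma slab_ub (hd : 2 ≤ d) (A : Set E) (c L ε : ℝ) (hL : 0 < L) (hε : 0 < ε) :
    μH[(d:ℝ)] ((fun p : E × ℝ => snocPt d p.1 p.2) '' (A ×ˢ Icc c (c+L)))
      ≤ ENNReal.ofReal (2 ^ ((d:ℝ)+2) * L) * (μH[(d:ℝ)-1] A + ENNReal.ofReal ε) := by
  have hd1 : (1:ℝ) ≤ (d:ℝ) - 1 := by
    have : (2:ℝ) ≤ (d:ℝ) := by exact_mod_cast hd
    linarith
  have hdpos : (0:ℝ) < (d:ℝ) := by linarith
  set M := μH[(d:ℝ)-1] A with hModef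
  classical
  by_cases hM : M = ∞
  · have hne : ENNReal.ofReal (2 ^ ((d:ℝ)+2) * L) ≠ 0 := by
      rw [Ne, ENNReal.ofReal_eq_zero, not_le]
      positivity
    rw [hM, top_add, ENNReal.mul_top hne]
    exact le_top
  -- main case
  -- Step A: choose for every `m` a cover of `A` at scale `1/(m+1)`
  have key : ∀ m : ℕ, ∃ U : ℕ → Set E, (A ⊆ ⋃ n, U n) ∧
      (∀ n, EMetric.diam (U n) ≤ ENNReal.ofReal (1/(m+1))) ∧
      (∑' n, ⨆ _ : (U n).Nonempty, EMetric.diam (U n) ^ ((d:ℝ)-1)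
        ≤ M + ENNReal.ofReal ε) := by
    intro m
    have hδ : (0:ℝ≥0∞) < ENNReal.ofReal (1/(m+1)) := by
      rw [ENNReal.ofReal_pos]; positivity
    have h1 : (⨅ (t : ℕ → Set E) (_ : A ⊆ ⋃ n, t n)
        (_ : ∀ n, EMetric.diam (t n) ≤ ENNReal.ofReal (1/(m+1))),
          ∑' n, ⨆ _ : (t n).Nonempty, EMetric.diam (t n) ^ ((d:ℝ)-1)) ≤ M := by
      rw [hModef, MeasureTheory.Measure.hausdorffMeasure_apply]
      exact le_iSup₂ (f := fun r (_ : (0:ℝ≥0∞) < r) => ⨅ (t : ℕ → Set E) (_ : A ⊆ ⋃ n, t n)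
        (_ : ∀ n, EMetric.diam (t n) ≤ r),
          ∑' n, ⨆ _ : (t n).Nonempty, EMetric.diam (t n) ^ ((d:ℝ)-1))
        (ENNReal.ofReal (1/(m+1))) hδ
    have h2 := h1.trans_lt (ENNReal.lt_add_right hM (ENNReal.ofReal_pos.2 hε).ne')
    simp only [iInf_lt_iff] at h2
    obtain ⟨U, hUc, hUd, hUs⟩ := h2
    exact ⟨U, hUc, hUd, hUs.le⟩
  choose U hUcov hUdiam hUsum using key
  -- real diameters and widths
  set h : ℕ → ℝ := fun m => 1/(m+1) with hh
  have hhpos : ∀ m, 0 < h m := fun m => by positivity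
  have hh1 : ∀ m, h m ≤ 1 := by
    intro m
    rw [hh]
    rw [div_le_one (by positivity)]
    simp
  set w : ℕ → ℕ → ℝ := fun m n => max (Metric.diam (U m n)) ((1/2)^n * h m) with hw
  have hwpos : ∀ m n, 0 < w m n := fun m n => lt_max_of_lt_right (by positivity)
  have hdiamreal : ∀ m n, Metric.diam (U m n) ≤ h m := by
    intro m n
    exact ENNReal.toReal_le_of_le_ofReal (hhpos m).le (hUdiam m n)
  have hwle : ∀ m n, w m n ≤ h m := by
    intro m n
    refine max_le (hdiamreal m n) ?_
    calc (1/2:ℝ)^n * h m ≤ 1 * h m := by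
          refine mul_le_mul_of_nonneg_right ?_ (hhpos m).le
          exact pow_le_one₀ (by norm_num) (by norm_num)
      _ = h m := one_mul _
  have hediam : ∀ m n, EMetric.diam (U m n) ≤ ENNReal.ofReal (w m n) := by
    intro m n
    have hfin : EMetric.diam (U m n) ≠ ∞ := ((hUdiam m n).trans_lt ENNReal.ofReal_lt_top).ne
    rw [← ENNReal.ofReal_toReal hfin]
    exact ENNReal.ofReal_le_ofReal (le_max_left _ _)
  -- the pieces of the cover of the slab
  set pc : ℕ → ℕ × ℕ → Set E' := fun m nk =>
    if (U m nk.1).Nonempty then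
      (fun p : E × ℝ => snocPt d p.1 p.2) ''
        ((U m nk.1) ×ˢ (Icc (c + nk.2 * w m nk.1) (c + (nk.2+1) * w m nk.1) ∩ Icc c (c+L)))
    else ∅ with hpc
  have hdiampc : ∀ m nk, EMetric.diam (pc m nk) ≤ ENNReal.ofReal (2 * w m nk.1) := by
    intro m ⟨n, k⟩
    rw [hpc]
    dsimp only
    split_ifs with hne
    · refine EMetric.diam_le ?_
      rintro z ⟨⟨x, s⟩, ⟨hx, hs⟩, rfl⟩ z' ⟨⟨x', s'⟩, ⟨hx', hs'⟩, rfl⟩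
      refine (edist_snocPt_le x x' s s').trans ?_
      have h1 : edist x x' ≤ ENNReal.ofReal (w m n) :=
        (EMetric.edist_le_diam_of_mem hx hx').trans (hediam m n)
      have h2 : edist s s' ≤ ENNReal.ofReal (w m n) := by
        refine (EMetric.edist_le_diam_of_mem hs.1 hs'.1).trans ?_
        refine (EMetric.diam_mono (Icc_subset_Icc le_rfl le_rfl)).trans ?_
        rw [Real.ediam_Icc]
        exact ENNReal.ofReal_le_ofReal (by linarith)
      calc edist x x' + edist s s' ≤ ENNReal.ofReal (w m n) + ENNReal.ofReal (w m n) :=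
            add_le_add h1 h2
        _ = ENNReal.ofReal (2 * w m n) := by
            rw [← ENNReal.ofReal_add (hwpos m n).le (hwpos m n).le]; ring_nf
    · simp [EMetric.diam]
  have hcovpc : ∀ m, (fun p : E × ℝ => snocPt d p.1 p.2) '' (A ×ˢ Icc c (c+L)) ⊆
      ⋃ nk, pc m nk := by
    intro m
    rintro z ⟨⟨x, s⟩, ⟨hxA, hsI⟩, rfl⟩
    obtain ⟨n, hn⟩ := mem_iUnion.1 (hUcov m hxA)
    have hne : (U m n).Nonempty := ⟨x, hn⟩
    set k := ⌊(s - c) / w m n⌋₊ with hk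
    refine mem_iUnion.2 ⟨(n, k), ?_⟩
    rw [hpc]
    dsimp only
    rw [if_pos hne]
    have hq0 : 0 ≤ (s - c) / w m n := by
      apply div_nonneg (by linarith [hsI.1]) (hwpos m n).le
    have hfl : (k:ℝ) ≤ (s - c) / w m n := Nat.floor_le hq0
    have hfu : (s - c) / w m n < (k:ℝ) + 1 := Nat.lt_floor_add_one _
    refine ⟨(x, s), ⟨hn, ⟨⟨?_, ?_⟩, hsI⟩⟩, rfl⟩
    · have := mul_le_mul_of_nonneg_right hfl (hwpos m n).le
      rw [div_mul_cancel₀ _ (hwpos m n).ne'] at this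
      linarith
    · have := mul_le_mul_of_nonneg_right hfu.le (hwpos m n).le
      rw [div_mul_cancel₀ _ (hwpos m n).ne'] at this
      linarith
  -- row sums
  have hrow : ∀ m n, (∑' k : ℕ, EMetric.diam (pc m (n,k)) ^ (d:ℝ)) ≤
      ENNReal.ofReal (2^(d:ℝ) * (L + h m)) *
        ((⨆ _ : (U m n).Nonempty, EMetric.diam (U m n) ^ ((d:ℝ)-1)) +
          ENNReal.ofReal ((1/2)^n * h m)) := by
    intro m n
    by_cases hne : (U m n).Nonempty
    · -- terms vanish beyond K
      set K := ⌊L / w m n⌋₊ + 1 with hK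
      have hvan : ∀ k ∉ Finset.range K, EMetric.diam (pc m (n,k)) ^ (d:ℝ) = 0 := by
        intro k hk
        rw [Finset.mem_range, not_lt] at hk
        have h1 : L / w m n < (K:ℝ) := by
          rw [hK]; push_cast; exact Nat.lt_floor_add_one _
        have h2 : L / w m n < (k:ℝ) := h1.trans_le (by exact_mod_cast hk)
        have hkw : L < k * w m n := by
          have := mul_lt_mul_of_pos_right h2 (hwpos m n)
          rwa [div_mul_cancel₀ _ (hwpos m n).ne'] at this
        have hJ : Icc (c + k * w m n) (c + (k+1) * w m n) ∩ Icc c (c+L) = ∅ := by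
          rw [eq_empty_iff_forall_notMem]
          rintro s ⟨⟨hs1, _⟩, ⟨_, hs2⟩⟩
          linarith
        rw [hpc]
        dsimp only
        rw [if_pos hne, hJ]
        simp [EMetric.diam, ENNReal.zero_rpow_of_pos hdpos]
      rw [tsum_eq_sum hvan]
      have hterm : ∀ k : ℕ, EMetric.diam (pc m (n,k)) ^ (d:ℝ) ≤
          ENNReal.ofReal ((2 * w m n)^(d:ℝ)) := by
        intro k
        rw [← ENNReal.ofReal_rpow_of_pos (by positivity)]
        exact ENNReal.rpow_le_rpow (hdiampc m (n,k)) hdpos.le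
      have hreal : (K:ℝ) * (2 * w m n)^(d:ℝ) ≤
          2^(d:ℝ) * (L + h m) * (Metric.diam (U m n) ^ ((d:ℝ)-1) + (1/2)^n * h m) := by
        have hKle : (K:ℝ) ≤ L / w m n + 1 := by
          rw [hK]; push_cast
          have := Nat.floor_le (show 0 ≤ L / w m n by positivity)
          linarith
        have hwd : w m n ^ (d:ℝ) = w m n ^ ((d:ℝ)-1) * w m n := by
          rw [← Real.rpow_add_one (hwpos m n).ne' ((d:ℝ)-1)]
          norm_num
        have hsplit : (2 * w m n)^(d:ℝ) = 2^(d:ℝ) * w m n ^ (d:ℝ) :=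
          Real.mul_rpow (by norm_num) (hwpos m n).le
        have hstep1 : (K:ℝ) * (2 * w m n)^(d:ℝ) ≤
            (L / w m n + 1) * (2^(d:ℝ) * w m n ^ (d:ℝ)) := by
          rw [hsplit]
          exact mul_le_mul_of_nonneg_right hKle (by positivity)
        have hstep2 : (L / w m n + 1) * (2^(d:ℝ) * w m n ^ (d:ℝ)) =
            2^(d:ℝ) * (L * w m n ^ ((d:ℝ)-1) + w m n ^ (d:ℝ)) := by
          rw [hwd, div_add_one (hwpos m n).ne', div_mul_eq_mul_div, div_eq_iff (hwpos m n).ne']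
          ring
        have hstep3 : L * w m n ^ ((d:ℝ)-1) + w m n ^ (d:ℝ) ≤
            (L + h m) * w m n ^ ((d:ℝ)-1) := by
          rw [hwd]
          have := mul_le_mul_of_nonneg_left (hwle m n)
            (Real.rpow_nonneg (hwpos m n).le ((d:ℝ)-1))
          nlinarith [Real.rpow_nonneg (hwpos m n).le ((d:ℝ)-1)]
        have hstep4 : w m n ^ ((d:ℝ)-1) ≤
            Metric.diam (U m n) ^ ((d:ℝ)-1) + (1/2)^n * h m := by
          refine (max_rpow_le Metric.diam_nonneg (by positivity) (by linarith)).trans ?_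
          gcongr
          have hple : ((1:ℝ)/2)^n ≤ 1 := pow_le_one₀ (by norm_num) (by norm_num)
          have hpnn : (0:ℝ) ≤ (1/2:ℝ)^n := by positivity
          have hx1 : (1/2:ℝ)^n * h m ≤ 1 := by nlinarith [(hhpos m).le, hh1 m]
          exact rpow_le_self (by positivity) hx1 hd1
        calc (K:ℝ) * (2 * w m n)^(d:ℝ) ≤ 2^(d:ℝ) * (L * w m n ^ ((d:ℝ)-1) + w m n ^ (d:ℝ)) := by
              rw [← hstep2]; exact hstep1
          _ ≤ 2^(d:ℝ) * ((L + h m) * w m n ^ ((d:ℝ)-1)) := by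
              refine mul_le_mul_of_nonneg_left hstep3 (by positivity)
          _ ≤ 2^(d:ℝ) * ((L + h m) * (Metric.diam (U m n) ^ ((d:ℝ)-1) + (1/2)^n * h m)) := by
              refine mul_le_mul_of_nonneg_left (mul_le_mul_of_nonneg_left hstep4 ?_) (by positivity)
              positivity
          _ = 2^(d:ℝ) * (L + h m) * (Metric.diam (U m n) ^ ((d:ℝ)-1) + (1/2)^n * h m) := by ring
      have hsup : ENNReal.ofReal (Metric.diam (U m n) ^ ((d:ℝ)-1)) =
          ⨆ _ : (U m n).Nonempty, EMetric.diam (U m n) ^ ((d:ℝ)-1) := by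
        rw [ciSup_pos hne]
        have hfin : EMetric.diam (U m n) ≠ ∞ :=
          ((hUdiam m n).trans_lt ENNReal.ofReal_lt_top).ne
        rw [← ENNReal.ofReal_rpow_of_nonneg Metric.diam_nonneg
          (by linarith : (0:ℝ) ≤ (d:ℝ)-1)]
        congr 1
        exact ENNReal.ofReal_toReal hfin
      calc ∑ k ∈ Finset.range K, EMetric.diam (pc m (n,k)) ^ (d:ℝ)
          ≤ ∑ _k ∈ Finset.range K, ENNReal.ofReal ((2 * w m n)^(d:ℝ)) :=
            Finset.sum_le_sum fun k _ => hterm k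
        _ = (K:ℝ≥0∞) * ENNReal.ofReal ((2 * w m n)^(d:ℝ)) := by
            rw [Finset.sum_const, Finset.card_range, nsmul_eq_mul]
        _ = ENNReal.ofReal ((K:ℝ) * (2 * w m n)^(d:ℝ)) := by
            rw [ENNReal.ofReal_mul (by positivity)]
            congr 1
            simp
        _ ≤ ENNReal.ofReal (2^(d:ℝ) * (L + h m) *
              (Metric.diam (U m n) ^ ((d:ℝ)-1) + (1/2)^n * h m)) :=
            ENNReal.ofReal_le_ofReal hreal
        _ = ENNReal.ofReal (2^(d:ℝ) * (L + h m)) *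
              ((⨆ _ : (U m n).Nonempty, EMetric.diam (U m n) ^ ((d:ℝ)-1)) +
                ENNReal.ofReal ((1/2)^n * h m)) := by
            rw [ENNReal.ofReal_mul (by positivity), ENNReal.ofReal_add (by positivity)
              (by positivity), hsup]
    · have hzero : ∀ k : ℕ, pc m (n,k) = ∅ := by
        intro k
        rw [hpc]
        dsimp only
        rw [if_neg hne]
      simp only [hzero, EMetric.diam_empty, ENNReal.zero_rpow_of_pos hdpos, tsum_zero]
      simp [EMetric.diam, ENNReal.zero_rpow_of_pos hdpos]
  -- total bound for each m
  have hgeo : ∀ m, (∑' n : ℕ, ENNReal.ofReal ((1/2)^n * h m)) ≤ ENNReal.ofReal (2 * h m) := by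
    intro m
    have heq : ∀ n : ℕ, ENNReal.ofReal ((1/2)^n * h m) =
        (ENNReal.ofReal (1/2))^n * ENNReal.ofReal (h m) := by
      intro n
      rw [ENNReal.ofReal_mul (by positivity), ENNReal.ofReal_pow (by norm_num)]
    simp only [heq]
    rw [ENNReal.tsum_mul_right, ENNReal.tsum_geometric]
    have hhalf : ENNReal.ofReal (1/2) = 2⁻¹ := by
      rw [ENNReal.ofReal_div_of_pos (by norm_num)]
      norm_num
    rw [hhalf]
    rw [ENNReal.one_sub_inv_two, inv_inv]
    rw [ENNReal.ofReal_mul (by norm_num : (0:ℝ) ≤ 2)]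
    gcongr
    simp
  have htot : ∀ m, (∑' nk : ℕ × ℕ, EMetric.diam (pc m nk) ^ (d:ℝ)) ≤
      ENNReal.ofReal (2^(d:ℝ) * (L + h m)) *
        (M + ENNReal.ofReal ε + ENNReal.ofReal (2 * h m)) := by
    intro m
    have hpr : (∑' nk : ℕ × ℕ, EMetric.diam (pc m nk) ^ (d:ℝ)) =
        ∑' (n : ℕ) (k : ℕ), EMetric.diam (pc m (n,k)) ^ (d:ℝ) := by
      rw [← ENNReal.tsum_prod]
    rw [hpr]
    calc (∑' (n : ℕ) (k : ℕ), EMetric.diam (pc m (n,k)) ^ (d:ℝ))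
        ≤ ∑' n, ENNReal.ofReal (2^(d:ℝ) * (L + h m)) *
            ((⨆ _ : (U m n).Nonempty, EMetric.diam (U m n) ^ ((d:ℝ)-1)) +
              ENNReal.ofReal ((1/2)^n * h m)) := ENNReal.tsum_le_tsum (hrow m)
      _ = ENNReal.ofReal (2^(d:ℝ) * (L + h m)) *
            ((∑' n, ⨆ _ : (U m n).Nonempty, EMetric.diam (U m n) ^ ((d:ℝ)-1)) +
              ∑' n, ENNReal.ofReal ((1/2)^n * h m)) := by
          rw [ENNReal.tsum_mul_left, ENNReal.tsum_add]
      _ ≤ ENNReal.ofReal (2^(d:ℝ) * (L + h m)) *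
            (M + ENNReal.ofReal ε + ENNReal.ofReal (2 * h m)) :=
          mul_le_mul_right (add_le_add (hUsum m) (hgeo m)) _
  -- liminf bound
  have hmain : μH[(d:ℝ)] ((fun p : E × ℝ => snocPt d p.1 p.2) '' (A ×ˢ Icc c (c+L)))
      ≤ Filter.liminf (fun m => ∑' nk : ℕ × ℕ, EMetric.diam (pc m nk) ^ (d:ℝ)) Filter.atTop := by
    refine MeasureTheory.Measure.hausdorffMeasure_le_liminf_tsum (d:ℝ) _
      (fun m => ENNReal.ofReal (2 * h m)) ?_ pc ?_ ?_
    · have hrt : Filter.Tendsto (fun m : ℕ => 2 * h m) Filter.atTop (𝓝 0) := by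
        have h0 := tendsto_one_div_add_atTop_nhds_zero_nat (𝕜 := ℝ)
        have := h0.const_mul (2:ℝ)
        simpa [hh] using this
      have := ENNReal.tendsto_ofReal (a := 0) hrt
      simpa using this
    · refine Filter.Eventually.of_forall fun m nk => ?_
      refine (hdiampc m nk).trans (ENNReal.ofReal_le_ofReal ?_)
      have := hwle m nk.1
      linarith
    · exact Filter.Eventually.of_forall hcovpc
  -- eventual constant bound
  have hC : Filter.liminf (fun m => ∑' nk : ℕ × ℕ, EMetric.diam (pc m nk) ^ (d:ℝ)) Filter.atTop
      ≤ ENNReal.ofReal (2 ^ ((d:ℝ)+2) * L) * (M + ENNReal.ofReal ε) := by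
    have hev : ∀ᶠ m in Filter.atTop, (∑' nk : ℕ × ℕ, EMetric.diam (pc m nk) ^ (d:ℝ))
        ≤ ENNReal.ofReal (2 ^ ((d:ℝ)+2) * L) * (M + ENNReal.ofReal ε) := by
      have hsm : ∀ᶠ m in Filter.atTop, h m ≤ min L (ε/2) := by
        have h0 : Filter.Tendsto h Filter.atTop (𝓝 0) := by
          have := tendsto_one_div_add_atTop_nhds_zero_nat (𝕜 := ℝ)
          simpa [hh] using this
        exact h0.eventually_le_const (by positivity)
      filter_upwards [hsm] with m hm
      refine (htot m).trans ?_
      have hm1 : h m ≤ L := hm.trans (min_le_left _ _)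
      have hm2 : 2 * h m ≤ ε := by
        have := hm.trans (min_le_right _ _); linarith
      calc ENNReal.ofReal (2^(d:ℝ) * (L + h m)) *
            (M + ENNReal.ofReal ε + ENNReal.ofReal (2 * h m))
          ≤ ENNReal.ofReal (2^(d:ℝ) * (2*L)) *
            ((M + ENNReal.ofReal ε) + (M + ENNReal.ofReal ε)) := by
            refine mul_le_mul' (ENNReal.ofReal_le_ofReal ?_) ?_
            · nlinarith [Real.rpow_nonneg (show (0:ℝ) ≤ 2 by norm_num) (d:ℝ)]
            · refine add_le_add le_rfl ?_
              refine le_add_left ((ENNReal.ofReal_le_ofReal hm2))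
        _ = ENNReal.ofReal (2 ^ ((d:ℝ)+2) * L) * (M + ENNReal.ofReal ε) := by
            have hX : (M + ENNReal.ofReal ε) + (M + ENNReal.ofReal ε)
                = 2 * (M + ENNReal.ofReal ε) := (two_mul _).symm
            rw [hX, ← mul_assoc]
            congr 1
            rw [show (2:ℝ≥0∞) = ENNReal.ofReal 2 from by simp,
              ← ENNReal.ofReal_mul (by positivity)]
            congr 1
            have h22 : (2:ℝ)^((2:ℕ):ℝ) = 4 := by rw [Real.rpow_natCast]; norm_num
            rw [Real.rpow_add (by norm_num : (0:ℝ) < 2)]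
            push_cast at h22 ⊢
            rw [h22]
            ring
    calc Filter.liminf (fun m => ∑' nk : ℕ × ℕ, EMetric.diam (pc m nk) ^ (d:ℝ)) Filter.atTop
        ≤ Filter.liminf (fun _ => ENNReal.ofReal (2 ^ ((d:ℝ)+2) * L) *
            (M + ENNReal.ofReal ε)) Filter.atTop := Filter.liminf_le_liminf hev
      _ = _ := Filter.liminf_const _
  exact hmain.trans hC


/-- Lower regularity bound for the tube `D × ℝ` in `ℝ^(d+1)`. -/
lemma tube_lb (hd : 2 ≤ d) (D : Set E) (aD bD : ℝ) (haD : 0 < aD) (hbD : 0 < bD)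
    (hDreg : ∀ x ∈ D, ∀ r : ℝ, 0 < r → r ≤ 1 →
      ENNReal.ofReal (aD * r ^ ((d : ℝ) - 1)) ≤ μH[(d : ℝ) - 1] (ball x r ∩ D) ∧
      μH[(d : ℝ) - 1] (ball x r ∩ D) ≤ ENNReal.ofReal (bD * r ^ ((d : ℝ) - 1)))
    (x₀ : E) (hx₀ : x₀ ∈ D) (t₀ r : ℝ) (hr : 0 < r) (hr1 : r ≤ 1) :
    ENNReal.ofReal ((aD / (2 ^ ((d:ℝ) - 1) * (2 * 3 ^ ((d:ℝ) - 1) * bD))) * r ^ (d:ℝ))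
      ≤ μH[(d:ℝ)] (ball (snocPt d x₀ t₀) r ∩ {z : E' | ∃ x ∈ D, ∃ t : ℝ, snocPt d x t = z}) := by
  have hd1 : (1:ℝ) ≤ (d:ℝ) - 1 := by
    have : (2:ℝ) ≤ (d:ℝ) := by exact_mod_cast hd
    linarith
  set S : Set E' := {z : E' | ∃ x ∈ D, ∃ t : ℝ, snocPt d x t = z} with hS
  set ι : E × ℝ → E' := fun p => snocPt d p.1 p.2 with hι
  set Cr : ℝ := 2 * 3 ^ ((d:ℝ) - 1) * bD with hCr
  have hCrpos : 0 < Cr := by rw [hCr]; positivity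
  -- finiteness of μH[(d-1)] on D ∩ ball x₀ 2
  obtain ⟨N, hN⟩ := PerpAux2.card_bound (V := E) μH[(d:ℝ)-1] 2
  have hDfin : μH[(d:ℝ)-1] (D ∩ ball x₀ 2) ≠ ∞ := by
    have h1 : ∀ w ∈ D, μH[(d:ℝ)-1] (ball w 1 ∩ D) ≤ ENNReal.ofReal bD := by
      intro w hw
      simpa using (hDreg w hw 1 one_pos le_rfl).2
    have h2 := hN x₀ D (ENNReal.ofReal bD) h1
    refine (lt_of_le_of_lt ?_ (lt_of_le_of_lt h2 ?_)).ne
    · exact measure_mono (fun y hy => ⟨ball_subset_closedBall hy.2, hy.1⟩)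
    · exact ENNReal.mul_lt_top (ENNReal.natCast_ne_top N).lt_top ENNReal.ofReal_lt_top
  set D' : Set E := D ∩ ball x₀ 2 with hD'
  set Dm : Set E := toMeasurable μH[(d:ℝ)-1] D' with hDm
  have hDmmeas : MeasurableSet Dm := measurableSet_toMeasurable _ _
  have hinter : ∀ B : Set E, MeasurableSet B →
      μH[(d:ℝ)-1] (Dm ∩ B) = μH[(d:ℝ)-1] (D' ∩ B) := by
    intro B hB
    exact MeasureTheory.Measure.measure_toMeasurable_inter hB hDfin
  set J' : Set ℝ := Ioo (t₀ - 2) (t₀ + 2) with hJ'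
  set μr : Measure E := μH[(d:ℝ)-1].restrict Dm with hμr
  set ρ : Measure (E × ℝ) := μr.prod (volume.restrict J') with hρ
  set ν : Measure E' := ρ.map ι with hν
  -- mass distribution bound
  have hmass : ∀ s : Set E', EMetric.diam s ≤ ENNReal.ofReal (1/8) →
      ν s ≤ ENNReal.ofReal Cr * EMetric.diam s ^ (d:ℝ) := by
    intro s hs
    rcases s.eq_empty_or_nonempty with rfl | ⟨z₀, hz₀⟩
    · simp
    have hsfin : EMetric.diam s ≠ ∞ := (hs.trans_lt ENNReal.ofReal_lt_top).ne
    set δ : ℝ := Metric.diam s with hδ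
    have hδ0 : 0 ≤ δ := Metric.diam_nonneg
    have hδ8 : δ ≤ 1/8 := ENNReal.toReal_le_of_le_ofReal (by norm_num) hs
    have hδdiam : EMetric.diam s = ENNReal.ofReal δ := (ENNReal.ofReal_toReal hsfin).symm
    set x₁ : E := WithLp.toLp 2 (fun i : Fin d => z₀ i.castSucc) with hx₁
    set t₁ : ℝ := z₀ (Fin.last d) with ht₁
    have hz₀eq : snocPt d x₁ t₁ = z₀ := snocPt_surj z₀
    have hsub : ι ⁻¹' (closure s) ⊆ closedBall x₁ δ ×ˢ closedBall t₁ δ := by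
      rintro ⟨x, t⟩ hxt
      have he : edist (ι (x,t)) z₀ ≤ ENNReal.ofReal δ := by
        rw [← hδdiam, EMetric.diam, ← EMetric.diam_closure]
        exact EMetric.edist_le_diam_of_mem hxt (subset_closure hz₀)
      have hdist : dist (ι (x,t)) z₀ ≤ δ := by
        rw [edist_dist] at he
        exact (ENNReal.ofReal_le_ofReal_iff hδ0).1 he
      have hd1' : dist x x₁ ≤ δ := by
        refine (dist_fst_le x x₁ t t₁).trans ?_
        rw [show snocPt d x₁ t₁ = z₀ from hz₀eq]
        exact hdist
      have hd2' : dist t t₁ ≤ δ := by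
        refine (dist_snd_le x x₁ t t₁).trans ?_
        rw [show snocPt d x₁ t₁ = z₀ from hz₀eq]
        exact hdist
      exact ⟨mem_closedBall.2 hd1', mem_closedBall.2 hd2'⟩
    have hν1 : ν s ≤ ρ (ι ⁻¹' (closure s)) := by
      rw [hν]
      refine (measure_mono subset_closure).trans ?_
      rw [Measure.map_apply measurable_snocPt isClosed_closure.measurableSet]
    have hν2 : ρ (ι ⁻¹' closure s) ≤ μr (closedBall x₁ δ) *
        (volume.restrict J') (closedBall t₁ δ) := by
      refine (measure_mono hsub).trans (le_of_eq ?_)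
      rw [hρ, Measure.prod_prod]
    have hvol : (volume.restrict J') (closedBall t₁ δ) ≤ ENNReal.ofReal (2*δ) := by
      refine le_trans (Measure.restrict_le_self _) (le_of_eq ?_)
      rw [Real.volume_closedBall]
    have hμrB : μr (closedBall x₁ δ) = μH[(d:ℝ)-1] (D' ∩ closedBall x₁ δ) := by
      rw [hμr, Measure.restrict_apply measurableSet_closedBall, inter_comm,
        hinter _ measurableSet_closedBall]
    rcases eq_empty_or_nonempty (D' ∩ closedBall x₁ δ) with hemp | ⟨p, hpD', hpB⟩
    · refine le_trans (hν1.trans (hν2.trans ?_)) zero_le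
      rw [hμrB, hemp]
      simp
    rcases lt_or_ge 0 δ with hδpos | hδnonpos
    · -- main case
      have h3δ1 : 3 * δ ≤ 1 := by linarith
      have h3δpos : 0 < 3 * δ := by linarith
      have h3δ : D' ∩ closedBall x₁ δ ⊆ ball p (3*δ) ∩ D := by
        rintro q ⟨hqD', hqB⟩
        refine ⟨mem_ball.2 ?_, hqD'.1⟩
        calc dist q p ≤ dist q x₁ + dist x₁ p := dist_triangle _ _ _
          _ ≤ δ + δ := add_le_add (mem_closedBall.1 hqB)
              (by rw [dist_comm]; exact mem_closedBall.1 hpB)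
          _ < 3 * δ := by linarith
      have hμD : μH[(d:ℝ)-1] (D' ∩ closedBall x₁ δ) ≤
          ENNReal.ofReal (bD * (3*δ) ^ ((d:ℝ)-1)) :=
        (measure_mono h3δ).trans (hDreg p hpD'.1 (3*δ) h3δpos h3δ1).2
      refine (hν1.trans (hν2.trans ?_))
      calc μr (closedBall x₁ δ) * (volume.restrict J') (closedBall t₁ δ)
          ≤ ENNReal.ofReal (bD * (3*δ) ^ ((d:ℝ)-1)) * ENNReal.ofReal (2*δ) := by
            refine mul_le_mul' ?_ hvol
            rw [hμrB]; exact hμD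
        _ = ENNReal.ofReal (Cr * δ ^ (d:ℝ)) := by
            rw [← ENNReal.ofReal_mul (by positivity)]
            congr 1
            rw [Real.mul_rpow (by norm_num) hδ0, hCr]
            have hδd : δ ^ (d:ℝ) = δ ^ ((d:ℝ)-1) * δ := by
              rw [← Real.rpow_add_one hδpos.ne' ((d:ℝ)-1)]
              norm_num
            rw [hδd]
            ring
        _ = ENNReal.ofReal Cr * EMetric.diam s ^ (d:ℝ) := by
            rw [hδdiam, ENNReal.ofReal_rpow_of_nonneg hδ0
              (by positivity : (0:ℝ) ≤ (d:ℝ)), ← ENNReal.ofReal_mul hCrpos.le]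
    · have hδ0' : δ = 0 := le_antisymm hδnonpos hδ0
      refine le_trans (hν1.trans (hν2.trans ?_)) zero_le
      refine le_trans (mul_le_mul' le_rfl hvol) (le_of_eq ?_)
      rw [hδ0']
      simp
  -- the mass distribution principle
  have hprin : ∀ s : Set E', (ENNReal.ofReal Cr)⁻¹ * ν s ≤ μH[(d:ℝ)] s := by
    have hle : (ENNReal.ofReal Cr)⁻¹ • ν ≤ μH[(d:ℝ)] := by
      refine MeasureTheory.Measure.le_hausdorffMeasure _ _ (ENNReal.ofReal (1/8))
        (by rw [ENNReal.ofReal_pos]; norm_num) (fun s hs => ?_)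
      rw [Measure.smul_apply, smul_eq_mul]
      refine le_trans (mul_le_mul' le_rfl (hmass s hs)) (le_of_eq ?_)
      rw [← mul_assoc, ENNReal.inv_mul_cancel (by rw [Ne, ENNReal.ofReal_eq_zero]; linarith)
        ENNReal.ofReal_ne_top, one_mul]
      rfl
    intro s
    have := Measure.le_iff'.1 hle s
    rwa [Measure.smul_apply, smul_eq_mul] at this
  -- lower bound for ν on the ball
  have hν_lb : ENNReal.ofReal (aD * (r/2) ^ ((d:ℝ)-1)) * ENNReal.ofReal r ≤
      ν (ball (snocPt d x₀ t₀) r ∩ S) := by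
    rw [measure_eq_iInf]
    refine le_iInf fun B => le_iInf fun hB => le_iInf fun hBm => ?_
    rw [hν, Measure.map_apply measurable_snocPt hBm]
    set T : Set (E × ℝ) := ι ⁻¹' B with hT
    have hTm : MeasurableSet T := measurable_snocPt hBm
    have hmeasf : Measurable (fun x : E => (volume.restrict J') (Prod.mk x ⁻¹' T)) :=
      measurable_measure_prodMk_left hTm
    set G : Set E := (fun x : E => (volume.restrict J') (Prod.mk x ⁻¹' T)) ⁻¹'
      (Ici (ENNReal.ofReal r)) with hG
    have hGm : MeasurableSet G := hmeasf measurableSet_Ici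
    have hDG : D ∩ ball x₀ (r/2) ⊆ G := by
      rintro x ⟨hxD, hxball⟩
      have hIoo : Ioo (t₀ - r/2) (t₀ + r/2) ⊆ Prod.mk x ⁻¹' T := by
        intro t ht
        have hdist : dist (snocPt d x t) (snocPt d x₀ t₀) < r := by
          refine (dist_snocPt_le x x₀ t t₀).trans_lt ?_
          have h1 : dist x x₀ < r/2 := mem_ball.1 hxball
          have h2 : dist t t₀ < r/2 := by
            rw [Real.dist_eq, abs_lt]
            constructor <;> [linarith [ht.1]; linarith [ht.2]]
          linarith
        refine hB ⟨mem_ball.2 hdist, ?_⟩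
        exact ⟨x, hxD, t, rfl⟩
      have hvol2 : ENNReal.ofReal r ≤ (volume.restrict J') (Prod.mk x ⁻¹' T) := by
        have hsubJ : Ioo (t₀ - r/2) (t₀ + r/2) ⊆ J' := by
          rw [hJ']
          exact Ioo_subset_Ioo (by linarith) (by linarith)
        calc ENNReal.ofReal r = volume (Ioo (t₀ - r/2) (t₀ + r/2)) := by
              rw [Real.volume_Ioo]
              congr 1
              ring
          _ = (volume.restrict J') (Ioo (t₀ - r/2) (t₀ + r/2)) := by
              rw [Measure.restrict_apply measurableSet_Ioo,
                inter_eq_self_of_subset_left hsubJ]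
          _ ≤ _ := measure_mono hIoo
      exact hvol2
    calc ENNReal.ofReal (aD * (r/2) ^ ((d:ℝ)-1)) * ENNReal.ofReal r
        ≤ μr G * ENNReal.ofReal r := by
          refine mul_le_mul' ?_ le_rfl
          have h1 : μr G = μH[(d:ℝ)-1] (D' ∩ G) := by
            rw [hμr, Measure.restrict_apply hGm, inter_comm, hinter _ hGm]
          rw [h1]
          refine le_trans ?_ (measure_mono (show ball x₀ (r/2) ∩ D ⊆ D' ∩ G from ?_))
          · exact (hDreg x₀ hx₀ (r/2) (by linarith) (by linarith)).1
          · rintro q ⟨hq1, hq2⟩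
            exact ⟨⟨hq2, ball_subset_ball (by linarith) hq1⟩, hDG ⟨hq2, hq1⟩⟩
      _ = ENNReal.ofReal r * μr G := mul_comm _ _
      _ ≤ ∫⁻ x in G, (volume.restrict J') (Prod.mk x ⁻¹' T) ∂μr := by
          rw [← MeasureTheory.setLIntegral_const]
          refine MeasureTheory.setLIntegral_mono hmeasf fun x hx => hx
      _ ≤ ∫⁻ x, (volume.restrict J') (Prod.mk x ⁻¹' T) ∂μr :=
          MeasureTheory.setLIntegral_le_lintegral _ _
      _ = ρ T := (Measure.prod_apply hTm).symm
  -- conclusion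
  refine le_trans (le_of_eq ?_) (le_trans (mul_le_mul' le_rfl hν_lb) (hprin _))
  rw [← ENNReal.ofReal_mul (show (0:ℝ) ≤ aD * (r/2) ^ ((d:ℝ)-1) by positivity)]
  have hre : aD / (2 ^ ((d:ℝ)-1) * Cr) * r ^ (d:ℝ) = (aD * (r/2) ^ ((d:ℝ)-1) * r) / Cr := by
    have h1 : (r/2 : ℝ) ^ ((d:ℝ)-1) = r ^ ((d:ℝ)-1) / 2 ^ ((d:ℝ)-1) := by
      rw [Real.div_rpow hr.le (by norm_num : (0:ℝ) ≤ 2)]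
    have h2 : r ^ (d:ℝ) = r ^ ((d:ℝ)-1) * r := by
      rw [← Real.rpow_add_one hr.ne' ((d:ℝ)-1)]
      norm_num
    have h2pos : (0:ℝ) < 2 ^ ((d:ℝ)-1) := by positivity
    rw [h1, h2]
    field_simp
  rw [hre, ENNReal.ofReal_div_of_pos hCrpos, ENNReal.div_eq_inv_mul]


/-- The Hausdorff measure of a ball intersected with the horizontal copy of `O`. -/
lemma plane_measure (O : Set E) (x : E) (r : ℝ) :
    μH[(d:ℝ)] (ball (snocPt d x 0) r ∩ {z : E' | ∃ y ∈ O, snocPt d y 0 = z})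
      = μH[(d:ℝ)] (ball x r ∩ O) := by
  have hiso : Isometry (fun y : E => snocPt d y (0:ℝ)) := isometry_snocPt_zero
  have hset : ball (snocPt d x 0) r ∩ {z : E' | ∃ y ∈ O, snocPt d y 0 = z}
      = (fun y : E => snocPt d y (0:ℝ)) '' (ball x r ∩ O) := by
    ext z
    constructor
    · rintro ⟨hzb, ⟨y, hyO, rfl⟩⟩
      refine ⟨y, ⟨?_, hyO⟩, rfl⟩
      rw [mem_ball] at hzb ⊢
      rwa [hiso.dist_eq y x] at hzb
    · rintro ⟨y, ⟨hyb, hyO⟩, rfl⟩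
      refine ⟨?_, ⟨y, hyO, rfl⟩⟩
      rw [mem_ball] at hyb ⊢
      rw [hiso.dist_eq y x]
      exact hyb
  rw [hset, hiso.hausdorffMeasure_image (Or.inl (by positivity : (0:ℝ) ≤ (d:ℝ)))]

/-- Upper regularity bound for the tube `D × ℝ`, at centers in the tube. -/
lemma tube_ub (hd : 2 ≤ d) (D : Set E) (bD : ℝ) (hbD : 0 < bD)
    (hDub : ∀ x ∈ D, ∀ r : ℝ, 0 < r → r ≤ 1 →
      μH[(d:ℝ)-1] (ball x r ∩ D) ≤ ENNReal.ofReal (bD * r ^ ((d:ℝ)-1)))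
    (x₀ : E) (hx₀ : x₀ ∈ D) (t₀ r : ℝ) (hr : 0 < r) (hr1 : r ≤ 1) :
    μH[(d:ℝ)] (ball (snocPt d x₀ t₀) r ∩ {z : E' | ∃ x ∈ D, ∃ t : ℝ, snocPt d x t = z})
      ≤ ENNReal.ofReal ((2 ^ ((d:ℝ)+2) * 2 * (bD + 1)) * r ^ (d:ℝ)) := by
  have hd1 : (1:ℝ) ≤ (d:ℝ) - 1 := by
    have : (2:ℝ) ≤ (d:ℝ) := by exact_mod_cast hd
    linarith
  have hsub : ball (snocPt d x₀ t₀) r ∩ {z : E' | ∃ x ∈ D, ∃ t : ℝ, snocPt d x t = z}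
      ⊆ (fun p : E × ℝ => snocPt d p.1 p.2) ''
        ((ball x₀ r ∩ D) ×ˢ Icc (t₀ - r) ((t₀ - r) + 2*r)) := by
    rintro z ⟨hzb, ⟨x, hxD, t, rfl⟩⟩
    rw [mem_ball] at hzb
    refine ⟨(x, t), ⟨⟨?_, hxD⟩, ?_⟩, rfl⟩
    · rw [mem_ball]
      exact (dist_fst_le x x₀ t t₀).trans_lt hzb
    · have := (dist_snd_le x x₀ t t₀).trans_lt hzb
      rw [Real.dist_eq, abs_lt] at this
      constructor
      · linarith [this.2]
      · linarith [this.1]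
  refine (measure_mono hsub).trans ?_
  refine (slab_ub hd (ball x₀ r ∩ D) (t₀ - r) (2*r) (r ^ ((d:ℝ)-1))
    (by linarith) (by positivity)).trans ?_
  have hDB : μH[(d:ℝ)-1] (ball x₀ r ∩ D) + ENNReal.ofReal (r ^ ((d:ℝ)-1))
      ≤ ENNReal.ofReal ((bD + 1) * r ^ ((d:ℝ)-1)) := by
    refine le_trans (add_le_add (hDub x₀ hx₀ r hr hr1) le_rfl) (le_of_eq ?_)
    rw [← ENNReal.ofReal_add (by positivity) (by positivity)]
    congr 1
    ring
  refine le_trans (mul_le_mul' le_rfl hDB) (le_of_eq ?_)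
  rw [← ENNReal.ofReal_mul (by positivity)]
  congr 1
  have hrd : r ^ (d:ℝ) = r ^ ((d:ℝ)-1) * r := by
    rw [← Real.rpow_add_one hr.ne' ((d:ℝ)-1)]
    norm_num
  rw [hrd]
  ring

end PerpAux
end

/-- If `O ⊆ ℝ^d` is open and `d`-regular and `D ⊆ ℝ^d` is `(d-1)`-regular, then the
subsets `D × ℝ`, `O × {0}` and `O ⊥ D = (O × {0}) ∪ (D × ℝ)` of `ℝ^(d+1)` are all
`d`-regular with respect to `d`-dimensional Hausdorff measure on `ℝ^(d+1)`. -/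
theorem perp_sets_d_regular (d : ℕ) (hd : 2 ≤ d)
    (O : Set (EuclideanSpace ℝ (Fin d))) (hO : IsOpen O)
    (aO bO : ℝ) (haO : 0 < aO) (habO : aO ≤ bO)
    (hOreg : ∀ x ∈ O, ∀ r : ℝ, 0 < r → r ≤ 1 →
      ENNReal.ofReal (aO * r ^ (d : ℝ)) ≤ μH[(d : ℝ)] (ball x r ∩ O) ∧
      μH[(d : ℝ)] (ball x r ∩ O) ≤ ENNReal.ofReal (bO * r ^ (d : ℝ)))
    (D : Set (EuclideanSpace ℝ (Fin d)))
    (aD bD : ℝ) (haD : 0 < aD) (habD : aD ≤ bD)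
    (hDreg : ∀ x ∈ D, ∀ r : ℝ, 0 < r → r ≤ 1 →
      ENNReal.ofReal (aD * r ^ ((d : ℝ) - 1)) ≤ μH[(d : ℝ) - 1] (ball x r ∩ D) ∧
      μH[(d : ℝ) - 1] (ball x r ∩ D) ≤ ENNReal.ofReal (bD * r ^ ((d : ℝ) - 1))) :
    ∀ S : Set (EuclideanSpace ℝ (Fin (d + 1))),
      (S = {z | ∃ x ∈ D, ∃ t : ℝ, snocPt d x t = z} ∨
       S = {z | ∃ x ∈ O, snocPt d x 0 = z} ∨
       S = {z | ∃ x ∈ O, snocPt d x 0 = z} ∪ {z | ∃ x ∈ D, ∃ t : ℝ, snocPt d x t = z}) →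
      ∃ a b : ℝ, 0 < a ∧ a ≤ b ∧
        ∀ z ∈ S, ∀ r : ℝ, 0 < r → r ≤ 1 →
          ENNReal.ofReal (a * r ^ (d : ℝ)) ≤ μH[(d : ℝ)] (ball z r ∩ S) ∧
          μH[(d : ℝ)] (ball z r ∩ S) ≤ ENNReal.ofReal (b * r ^ (d : ℝ)) := by
  classical
  intro S hS
  have hbO : 0 < bO := haO.trans_le habO
  have hbD : 0 < bD := haD.trans_le habD
  set S1 : Set (EuclideanSpace ℝ (Fin (d+1))) :=
    {z | ∃ x ∈ D, ∃ t : ℝ, snocPt d x t = z} with hS1def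
  set S2 : Set (EuclideanSpace ℝ (Fin (d+1))) :=
    {z | ∃ x ∈ O, snocPt d x 0 = z} with hS2def
  set a1 : ℝ := aD / (2 ^ ((d:ℝ) - 1) * (2 * 3 ^ ((d:ℝ) - 1) * bD)) with ha1def
  set b1 : ℝ := 2 ^ ((d:ℝ)+2) * 2 * (bD + 1) with hb1def
  have ha1pos : 0 < a1 := by rw [ha1def]; positivity
  have hb1pos : 0 < b1 := by rw [hb1def]; positivity
  have hrpow_mono : ∀ (u v r : ℝ), u ≤ v → 0 < r →
      ENNReal.ofReal (u * r ^ (d:ℝ)) ≤ ENNReal.ofReal (v * r ^ (d:ℝ)) := by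
    intro u v r huv hr
    exact ENNReal.ofReal_le_ofReal
      (mul_le_mul_of_nonneg_right huv (Real.rpow_nonneg hr.le _))
  -- bounds for S1 at its own points
  have hS1low : ∀ z ∈ S1, ∀ r : ℝ, 0 < r → r ≤ 1 →
      ENNReal.ofReal (a1 * r ^ (d:ℝ)) ≤ μH[(d:ℝ)] (ball z r ∩ S1) := by
    rintro z ⟨x, hx, t, rfl⟩ r hr hr1
    exact PerpAux.tube_lb hd D aD bD haD hbD hDreg x hx t r hr hr1
  have hS1up : ∀ z ∈ S1, ∀ r : ℝ, 0 < r → r ≤ 1 →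
      μH[(d:ℝ)] (ball z r ∩ S1) ≤ ENNReal.ofReal (b1 * r ^ (d:ℝ)) := by
    rintro z ⟨x, hx, t, rfl⟩ r hr hr1
    exact PerpAux.tube_ub hd D bD hbD (fun y hy s hs hs1 => (hDreg y hy s hs hs1).2)
      x hx t r hr hr1
  -- bounds for S2 at its own points
  have hS2both : ∀ z ∈ S2, ∀ r : ℝ, 0 < r → r ≤ 1 →
      ENNReal.ofReal (aO * r ^ (d:ℝ)) ≤ μH[(d:ℝ)] (ball z r ∩ S2) ∧
      μH[(d:ℝ)] (ball z r ∩ S2) ≤ ENNReal.ofReal (bO * r ^ (d:ℝ)) := by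
    rintro z ⟨x, hx, rfl⟩ r hr hr1
    rw [hS2def, PerpAux.plane_measure O x r]
    exact hOreg x hx r hr hr1
  -- recentered upper bounds
  obtain ⟨b1', hb1le, hb1'pos, hub1⟩ := PerpAux2.recenter μH[(d:ℝ)] S1 (d:ℝ)
    (by positivity) b1 hb1pos hS1up
  obtain ⟨b2', hb2le, hb2'pos, hub2⟩ := PerpAux2.recenter μH[(d:ℝ)] S2 (d:ℝ)
    (by positivity) bO hbO (fun w hw r hr hr1 => (hS2both w hw r hr hr1).2)
  rcases hS with rfl | rfl | rfl
  · refine ⟨min a1 b1', max a1 b1', lt_min ha1pos hb1'pos,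
      (min_le_left _ _).trans (le_max_left _ _), fun z hz r hr hr1 => ?_⟩
    constructor
    · exact (hrpow_mono _ _ r (min_le_left _ _) hr).trans (hS1low z hz r hr hr1)
    · exact (hub1 z r hr hr1).trans (hrpow_mono _ _ r (le_max_right _ _) hr)
  · refine ⟨min aO b2', max aO b2', lt_min haO hb2'pos,
      (min_le_left _ _).trans (le_max_left _ _), fun z hz r hr hr1 => ?_⟩
    constructor
    · exact (hrpow_mono _ _ r (min_le_left _ _) hr).trans
        ((hS2both z hz r hr hr1).1)
    · exact (hub2 z r hr hr1).trans (hrpow_mono _ _ r (le_max_right _ _) hr)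
  · refine ⟨min (min aO a1) (b2' + b1'), max (min aO a1) (b2' + b1'),
      lt_min (lt_min haO ha1pos) (by positivity),
      (min_le_left _ _).trans (le_max_left _ _), fun z hz r hr hr1 => ?_⟩
    constructor
    · rcases hz with hz | hz
      · refine (hrpow_mono _ _ r ((min_le_left _ _).trans (min_le_left _ _)) hr).trans
          (((hS2both z hz r hr hr1).1).trans (measure_mono ?_))
        exact fun u hu => ⟨hu.1, Or.inl hu.2⟩
      · refine (hrpow_mono _ _ r ((min_le_left _ _).trans (min_le_right _ _)) hr).trans
          ((hS1low z hz r hr hr1).trans (measure_mono ?_))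
        exact fun u hu => ⟨hu.1, Or.inr hu.2⟩
    · calc μH[(d:ℝ)] (ball z r ∩ (S2 ∪ S1))
          ≤ μH[(d:ℝ)] (ball z r ∩ S2) + μH[(d:ℝ)] (ball z r ∩ S1) := by
            rw [Set.inter_union_distrib_left]
            exact measure_union_le _ _
        _ ≤ ENNReal.ofReal (b2' * r ^ (d:ℝ)) + ENNReal.ofReal (b1' * r ^ (d:ℝ)) :=
            add_le_add (hub2 z r hr hr1) (hub1 z r hr hr1)
        _ = ENNReal.ofReal ((b2' + b1') * r ^ (d:ℝ)) := by
            rw [← ENNReal.ofReal_add (by positivity) (by positivity)]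
            congr 1
            ring
        _ ≤ ENNReal.ofReal (max (min aO a1) (b2' + b1') * r ^ (d:ℝ)) :=
            hrpow_mono _ _ r (le_max_right _ _) hr
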